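/- Let (G,κ) be a proper edge coloring of a tree. Then Aut_κ(G) has order at most 2, i.e. it is either trivial or has exactly two elements. -/

import Mathlib

open scoped Classical

/-- A proper edge coloring of a finite simple graph `G` with colors `{1, …, k}`:
it assigns colors in `{1, …, k}` to edges, is surjective onto `{1, …, k}`, and
incident edges receive distinct colors. -/
def IsProperEdgeColoring {V : Type*} (G : SimpleGraph V) (k : ℕ) (κ : Sym2 V → ℕ) : Prop :=
  (∀ e ∈ G.edgeSet, κ e ∈ Finset.Icc 1 k) ∧
  (∀ a ∈ Finset.Icc 1 k, ∃ e ∈ G.edgeSet, κ e = a) ∧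
  (∀ u v w : V, G.Adj u v → G.Adj u w → v ≠ w → κ s(u, v) ≠ κ s(u, w))
/-- `IsColorAut G κ σ`: membership in `Aut_κ(G)`, i.e. `{i,j}` is an edge of `G`
colored `a` if and only if `{σ i, σ j}` is an edge of `G` colored `a`. -/
def IsColorAut {V : Type*} (G : SimpleGraph V) (κ : Sym2 V → ℕ) (σ : Equiv.Perm V) : Prop :=
  ∀ i j : V, ∀ a : ℕ,
    (G.Adj i j ∧ κ s(i, j) = a) ↔ (G.Adj (σ i) (σ j) ∧ κ s(σ i, σ j) = a)

namespace Stmt9Aux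

open SimpleGraph

variable {V : Type*} {G : SimpleGraph V} {κ : Sym2 V → ℕ} {k : ℕ} {σ τ : Equiv.Perm V}

lemma colorAut_adj (h : IsColorAut G κ σ) {i j : V} (ha : G.Adj i j) :
    G.Adj (σ i) (σ j) := ((h i j (κ s(i, j))).mp ⟨ha, rfl⟩).1

lemma colorAut_color (h : IsColorAut G κ σ) {i j : V} (ha : G.Adj i j) :
    κ s(σ i, σ j) = κ s(i, j) := ((h i j (κ s(i, j))).mp ⟨ha, rfl⟩).2

lemma colorAut_adj_iff (h : IsColorAut G κ σ) {i j : V} :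
    G.Adj (σ i) (σ j) ↔ G.Adj i j :=
  ⟨fun ha => ((h i j (κ s(σ i, σ j))).mpr ⟨ha, rfl⟩).1, colorAut_adj h⟩

lemma colorAut_inv (h : IsColorAut G κ σ) : IsColorAut G κ σ⁻¹ := by
  intro i j a
  have := (h (σ⁻¹ i) (σ⁻¹ j) a).symm
  simpa using this

lemma colorAut_mul (h1 : IsColorAut G κ σ) (h2 : IsColorAut G κ τ) :
    IsColorAut G κ (σ * τ) := by
  intro i j a
  have e1 := h2 i j a
  have e2 := h1 (τ i) (τ j) a
  simpa [Equiv.Perm.mul_apply] using e1.trans e2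

/-- A color automorphism as a graph homomorphism. -/
def colorAutHom (h : IsColorAut G κ σ) : G →g G :=
  ⟨σ, fun ha => colorAut_adj h ha⟩

lemma dist_map_le (h : IsColorAut G κ σ) (hc : G.Connected) (x y : V) :
    G.dist (σ x) (σ y) ≤ G.dist x y := by
  obtain ⟨p, hp⟩ := hc.exists_walk_length_eq_dist x y
  calc G.dist (σ x) (σ y) ≤ (p.map (colorAutHom h)).length := SimpleGraph.dist_le _
    _ = p.length := Walk.length_map _ p
    _ = _ := hp

lemma dist_map (h : IsColorAut G κ σ) (hc : G.Connected) (x y : V) :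
    G.dist (σ x) (σ y) = G.dist x y := by
  refine le_antisymm (dist_map_le h hc x y) ?_
  have := dist_map_le (colorAut_inv h) hc (σ x) (σ y)
  simpa using this

lemma colorAut_fix_adj (hκ : IsProperEdgeColoring G k κ) (h : IsColorAut G κ σ)
    {x y : V} (hx : σ x = x) (ha : G.Adj x y) : σ y = y := by
  by_contra hne
  have h1 : G.Adj x (σ y) := by have := colorAut_adj h ha; rwa [hx] at this
  have h2 : κ s(x, σ y) = κ s(x, y) := by have := colorAut_color h ha; rwa [hx] at this
  exact hκ.2.2 x (σ y) y h1 ha hne h2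

lemma colorAut_eq_one_of_fix (hκ : IsProperEdgeColoring G k κ) (h : IsColorAut G κ σ)
    (hc : G.Connected) {x : V} (hx : σ x = x) : σ = 1 := by
  have key : ∀ {a b : V}, G.Walk a b → σ a = a → σ b = b := by
    intro a b p
    induction p with
    | nil => exact id
    | cons hadj q ih => exact fun h1 => ih (colorAut_fix_adj hκ h h1 hadj)
  ext y
  obtain ⟨p⟩ := hc x y
  simpa using key p hx

lemma path_unique (hG : G.IsTree) {a b : V} {p q : G.Walk a b}
    (hp : p.IsPath) (hq : q.IsPath) : p = q := by
  have := isAcyclic_iff_path_unique.mp hG.2 ⟨p, hp⟩ ⟨q, hq⟩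
  exact congrArg Subtype.val this

lemma dist_le_length_of_mem_support {a b u : V} {p : G.Walk a b} (hu : u ∈ p.support) :
    G.dist u b ≤ p.length :=
  le_trans (SimpleGraph.dist_le (p.dropUntil u hu)) (Walk.length_dropUntil_le p hu)

lemma adj_dist_ne (hG : G.IsTree) (r : V) {x y : V} (ha : G.Adj x y) :
    G.dist r x ≠ G.dist r y := by
  intro he
  obtain ⟨p, hp, hpl⟩ := hG.isConnected.exists_path_of_dist x r
  obtain ⟨q, hq, hql⟩ := hG.isConnected.exists_path_of_dist y r
  have hxy : G.dist x y = 1 := dist_eq_one_iff_adj.mpr ha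
  have hy : y ∉ p.support := by
    intro hy
    have hd : G.dist y r ≤ (p.dropUntil y hy).length :=
      SimpleGraph.dist_le _
    have hsplit := congrArg Walk.length (p.take_spec hy)
    rw [Walk.length_append] at hsplit
    have h2 : G.dist x y ≤ (p.takeUntil y hy).length := SimpleGraph.dist_le _
    have hcomm1 : G.dist y r = G.dist r y := SimpleGraph.dist_comm ..
    have hcomm2 : G.dist x r = G.dist r x := SimpleGraph.dist_comm ..
    omega
  have hR : (Walk.cons ha.symm p).IsPath := hp.cons hy
  have heq := path_unique hG hR hq
  have hlen := congrArg Walk.length heq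
  rw [Walk.length_cons, hpl, hql] at hlen
  have hcomm1 : G.dist y r = G.dist r y := SimpleGraph.dist_comm ..
  have hcomm2 : G.dist x r = G.dist r x := SimpleGraph.dist_comm ..
  omega

lemma step_exists (hc : G.Connected) {x y : V} (hxy : x ≠ y) :
    ∃ u, G.Adj x u ∧ G.dist u y + 1 = G.dist x y := by
  obtain ⟨p, hp, hl⟩ := hc.exists_path_of_dist x y
  have hd0 : G.dist x y ≠ 0 := fun h0 => hxy (hc.dist_eq_zero_iff.mp h0)
  cases p with
  | nil => exact absurd rfl hxy
  | @cons _ z _ hadj q =>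
      refine ⟨z, hadj, ?_⟩
      have h1 : G.dist z y ≤ q.length := SimpleGraph.dist_le q
      have h2 : G.dist x y ≤ G.dist x z + G.dist z y := hc.dist_triangle
      have h3 : G.dist x z = 1 := dist_eq_one_iff_adj.mpr hadj
      have h4 : q.length + 1 = G.dist x y := by
        rw [← hl, Walk.length_cons]
      omega

lemma step_unique (hG : G.IsTree) {x y u1 u2 : V}
    (h1 : G.Adj x u1) (hd1 : G.dist u1 y + 1 = G.dist x y)
    (h2 : G.Adj x u2) (hd2 : G.dist u2 y + 1 = G.dist x y) : u1 = u2 := by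
  obtain ⟨p1, hp1, hl1⟩ := hG.isConnected.exists_path_of_dist u1 y
  obtain ⟨p2, hp2, hl2⟩ := hG.isConnected.exists_path_of_dist u2 y
  have hx1 : x ∉ p1.support := by
    intro hx
    have := dist_le_length_of_mem_support hx
    omega
  have hx2 : x ∉ p2.support := by
    intro hx
    have := dist_le_length_of_mem_support hx
    omega
  have heq := path_unique hG (hp1.cons hx1 (h := h1)) (hp2.cons hx2 (h := h2))
  have := congrArg (fun w => w.getVert 1) heq
  simpa [Walk.getVert_cons _ _ one_ne_zero] using this

lemma exists_adj_move [Fintype V] (hG : G.IsTree) (hκ : IsProperEdgeColoring G k κ)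
    (h : IsColorAut G κ σ) (hσ : σ ≠ 1) : ∃ v, G.Adj v (σ v) := by
  have hc := hG.isConnected
  haveI : Nonempty V := hc.nonempty
  obtain ⟨v₀, -, hmin⟩ := Finset.exists_min_image (Finset.univ : Finset V)
      (fun v => G.dist v (σ v)) ⟨Classical.arbitrary V, Finset.mem_univ _⟩
  set m := G.dist v₀ (σ v₀) with hm
  have hmin' : ∀ u, m ≤ G.dist u (σ u) := fun u => hmin u (Finset.mem_univ u)
  have hm0 : m ≠ 0 := by
    intro h0
    have hfix : v₀ = σ v₀ := hc.dist_eq_zero_iff.mp h0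
    exact hσ (colorAut_eq_one_of_fix hκ h hc hfix.symm)
  by_cases hm1 : m = 1
  · exact ⟨v₀, dist_eq_one_iff_adj.mp hm1⟩
  have hm2 : 2 ≤ m := by omega
  exfalso
  set F : V → V := fun w =>
    if hw : ∃ u, G.Adj w u ∧ G.dist u (σ w) + 1 = G.dist w (σ w) then hw.choose else w
    with hF
  have hFspec : ∀ w, G.dist w (σ w) = m →
      G.Adj w (F w) ∧ G.dist (F w) (σ w) + 1 = m ∧ G.dist (F w) (σ (F w)) = m := by
    intro w hw
    have hne : w ≠ σ w := by
      intro he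
      rw [← he] at hw
      rw [SimpleGraph.dist_self] at hw
      omega
    have hex : ∃ u, G.Adj w u ∧ G.dist u (σ w) + 1 = G.dist w (σ w) := step_exists hc hne
    have hFw : F w = hex.choose := by
      simp only [hF]
      rw [dif_pos hex]
    obtain ⟨hadj, hdist⟩ := hex.choose_spec
    rw [← hFw] at hadj hdist
    have hd1 : G.dist (σ w) (σ (F w)) = 1 := by
      rw [dist_map h hc]
      exact dist_eq_one_iff_adj.mpr hadj
    have ht : G.dist (F w) (σ (F w)) ≤ G.dist (F w) (σ w) + G.dist (σ w) (σ (F w)) :=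
      hc.dist_triangle
    have hlo := hmin' (F w)
    exact ⟨hadj, by omega, by omega⟩
  have hFF : ∀ w, G.dist w (σ w) = m → G.dist (F (F w)) (σ w) + 2 = m := by
    intro w hw
    obtain ⟨hadj1, hd1, hw1⟩ := hFspec w hw
    obtain ⟨hadj2, hd2, hw2⟩ := hFspec (F w) hw1
    have hne : F w ≠ σ w := by
      intro he
      rw [he, SimpleGraph.dist_self] at hd1
      omega
    obtain ⟨u, hu, hud⟩ := step_exists hc hne
    have hdsu : G.dist (σ w) (σ (F w)) = 1 := by
      rw [dist_map h hc]
      exact dist_eq_one_iff_adj.mpr hadj1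
    have trig1 : G.dist u (σ (F w)) ≤ G.dist u (σ w) + G.dist (σ w) (σ (F w)) :=
      hc.dist_triangle
    have trig2 : G.dist (F w) (σ (F w)) ≤ G.dist (F w) u + G.dist u (σ (F w)) :=
      hc.dist_triangle
    have h1 : G.dist (F w) u = 1 := dist_eq_one_iff_adj.mpr hu
    have hueq : u = F (F w) :=
      step_unique hG (y := σ (F w)) hu (by omega) hadj2 (by omega)
    rw [← hueq]
    omega
  have hMin : ∀ n, G.dist (F^[n] v₀) (σ (F^[n] v₀)) = m := by
    intro n
    induction n with
    | zero => simpa using hm.symm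
    | succ n ih =>
        rw [Function.iterate_succ_apply']
        exact (hFspec _ ih).2.2
  have hAdj : ∀ n, G.Adj (F^[n] v₀) (F^[n + 1] v₀) := by
    intro n
    rw [Function.iterate_succ_apply']
    exact (hFspec _ (hMin n)).1
  have hNe : ∀ n, F^[n + 2] v₀ ≠ F^[n] v₀ := by
    intro n he
    have h2 := hFF _ (hMin n)
    rw [show F (F (F^[n] v₀)) = F^[n + 2] v₀ by
      rw [Function.iterate_succ_apply', Function.iterate_succ_apply'], he] at h2
    have := hMin n
    omega
  have hdist : ∀ n, G.dist v₀ (F^[n] v₀) = n := by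
    intro n
    induction n using Nat.twoStepInduction with
    | zero => simp
    | one =>
        have := hAdj 0
        simp only [Function.iterate_zero_apply] at this
        exact dist_eq_one_iff_adj.mpr this
    | more n ih1 ih2 =>
        have hab : G.Adj (F^[n] v₀) (F^[n + 1] v₀) := hAdj n
        have hbc : G.Adj (F^[n + 1] v₀) (F^[n + 2] v₀) := hAdj (n + 1)
        have hca : F^[n + 2] v₀ ≠ F^[n] v₀ := hNe n
        have hub : G.dist v₀ (F^[n + 2] v₀) ≤ G.dist v₀ (F^[n + 1] v₀) +
            G.dist (F^[n + 1] v₀) (F^[n + 2] v₀) := hc.dist_triangle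
        have hbc1 : G.dist (F^[n + 1] v₀) (F^[n + 2] v₀) = 1 := dist_eq_one_iff_adj.mpr hbc
        have hcb1 : G.dist (F^[n + 2] v₀) (F^[n + 1] v₀) = 1 := by
          rw [SimpleGraph.dist_comm]; exact hbc1
        have hlb : G.dist v₀ (F^[n + 1] v₀) ≤ G.dist v₀ (F^[n + 2] v₀) +
            G.dist (F^[n + 2] v₀) (F^[n + 1] v₀) := hc.dist_triangle
        have hne1 : G.dist v₀ (F^[n + 2] v₀) ≠ G.dist v₀ (F^[n + 1] v₀) :=
          fun he => adj_dist_ne hG v₀ hbc (by omega)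
        have hnen : G.dist v₀ (F^[n + 2] v₀) ≠ n := by
          intro he
          obtain ⟨p, hp, hpl⟩ := hc.exists_path_of_dist (F^[n + 2] v₀) v₀
          obtain ⟨q, hq, hql⟩ := hc.exists_path_of_dist (F^[n] v₀) v₀
          have hpd : p.length = n := by
            rw [hpl, SimpleGraph.dist_comm, he]
          have hqd : q.length = n := by
            rw [hql, SimpleGraph.dist_comm, ih1]
          have hbp : F^[n + 1] v₀ ∉ p.support := by
            intro hmem
            have := dist_le_length_of_mem_support hmem
            rw [hpd] at this
            rw [SimpleGraph.dist_comm] at ih2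
            omega
          have hbq : F^[n + 1] v₀ ∉ q.support := by
            intro hmem
            have := dist_le_length_of_mem_support hmem
            rw [hqd] at this
            rw [SimpleGraph.dist_comm] at ih2
            omega
          have heq := path_unique hG (hp.cons hbp (h := hbc)) (hq.cons hbq (h := hab.symm))
          have := congrArg (fun w => w.getVert 1) heq
          simp only [Walk.getVert_cons _ _ one_ne_zero, Nat.sub_self, Walk.getVert_zero] at this
          exact hca this
        omega
  have hcard : G.dist v₀ (F^[Fintype.card V] v₀) < Fintype.card V := by
    obtain ⟨p, hp, hl⟩ := hc.exists_path_of_dist v₀ (F^[Fintype.card V] v₀)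
    rw [← hl]
    exact hp.length_lt
  have := hdist (Fintype.card V)
  omega

lemma adj_parity (hG : G.IsTree) (r : V) {x y : V} (ha : G.Adj x y) :
    ((G.dist r y : ZMod 2)) = (G.dist r x : ZMod 2) + 1 := by
  have hxy : G.dist x y = 1 := dist_eq_one_iff_adj.mpr ha
  have hyx : G.dist y x = 1 := by rw [SimpleGraph.dist_comm]; exact hxy
  have h1 : G.dist r y ≤ G.dist r x + G.dist x y := hG.isConnected.dist_triangle
  have h2 : G.dist r x ≤ G.dist r y + G.dist y x := hG.isConnected.dist_triangle
  have h3 := adj_dist_ne hG r ha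
  have h22 : (1 + 1 : ZMod 2) = 0 := by decide
  have hcases : G.dist r y = G.dist r x + 1 ∨ G.dist r x = G.dist r y + 1 := by omega
  rcases hcases with hh | hh
  · rw [hh]; push_cast; ring
  · rw [hh]; push_cast
    rw [add_assoc, h22, add_zero]

lemma colorAut_parity (hG : G.IsTree) (h : IsColorAut G κ σ) (r : V) (x y : V) :
    (G.dist r (σ x) : ZMod 2) + (G.dist r x : ZMod 2) =
    (G.dist r (σ y) : ZMod 2) + (G.dist r y : ZMod 2) := by
  suffices H : ∀ {a b : V}, G.Walk a b →
      (G.dist r (σ a) : ZMod 2) + (G.dist r a : ZMod 2) =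
      (G.dist r (σ b) : ZMod 2) + (G.dist r b : ZMod 2) by
    obtain ⟨p⟩ := hG.isConnected x y
    exact H p
  intro a b p
  induction p with
  | nil => rfl
  | cons hadj q ih =>
      refine Eq.trans ?_ ih
      rw [adj_parity hG r (colorAut_adj h hadj), adj_parity hG r hadj]
      ring_nf
      rw [show (2 : ZMod 2) = 0 from by decide, zero_add]

lemma colorAut_parity_one [Fintype V] (hG : G.IsTree) (hκ : IsProperEdgeColoring G k κ)
    (h : IsColorAut G κ σ) (hσ : σ ≠ 1) (r x : V) :
    (G.dist r (σ x) : ZMod 2) + (G.dist r x : ZMod 2) = 1 := by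
  obtain ⟨v, hv⟩ := exists_adj_move hG hκ h hσ
  rw [colorAut_parity hG h r x v, adj_parity hG r hv]
  have h2 : (G.dist r v : ZMod 2) + (G.dist r v : ZMod 2) = 0 :=
    CharTwo.add_self_eq_zero _
  linear_combination h2

end Stmt9Aux

/-- For a proper edge coloring of a tree, `Aut_κ(G)` has at most two
elements (it is trivial or of order two). -/
theorem stmt_9 {V : Type*} [Fintype V] (G : SimpleGraph V) (hG : G.IsTree)
    (k : ℕ) (κ : Sym2 V → ℕ) (hκ : IsProperEdgeColoring G k κ) :
    {σ : Equiv.Perm V | IsColorAut G κ σ}.ncard ≤ 2 := by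
  classical
  have hc := hG.isConnected
  haveI : Nonempty V := hc.nonempty
  set A := {σ : Equiv.Perm V | IsColorAut G κ σ} with hA
  by_cases hall : ∀ σ ∈ A, σ = 1
  · have hsub : A ⊆ {1} := fun σ hσ => hall σ hσ
    calc A.ncard ≤ ({1} : Set (Equiv.Perm V)).ncard :=
          Set.ncard_le_ncard hsub (Set.finite_singleton _)
      _ = 1 := Set.ncard_singleton _
      _ ≤ 2 := by omega
  · push_neg at hall
    obtain ⟨τ, hτA, hτ⟩ := hall
    have hτA' : IsColorAut G κ τ := hτA
    have hsub : A ⊆ {1, τ} := by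
      intro σ hσA
      have hσA' : IsColorAut G κ σ := hσA
      by_cases h1 : σ = 1
      · exact Or.inl h1
      · have hρA : IsColorAut G κ (σ * τ⁻¹) :=
          Stmt9Aux.colorAut_mul hσA' (Stmt9Aux.colorAut_inv hτA')
        by_cases hρ : σ * τ⁻¹ = 1
        · exact Or.inr (mul_inv_eq_one.mp hρ)
        · exfalso
          have r : V := Classical.arbitrary V
          have e1 := Stmt9Aux.colorAut_parity_one hG hκ hσA' h1 r r
          have e2 := Stmt9Aux.colorAut_parity_one hG hκ hτA' hτ r r
          have e3 := Stmt9Aux.colorAut_parity_one hG hκ hρA hρ r (τ r)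
          have hsimp : (σ * τ⁻¹) (τ r) = σ r := by simp
          rw [hsimp] at e3
          have h4 : (G.dist r r : ZMod 2) + (G.dist r r : ZMod 2) = 0 :=
            CharTwo.add_self_eq_zero _
          have hbad : (1 : ZMod 2) = 0 := by linear_combination e3 - e1 - e2 + h4
          exact one_ne_zero hbad
    calc A.ncard ≤ ({1, τ} : Set (Equiv.Perm V)).ncard :=
          Set.ncard_le_ncard hsub ((Set.finite_singleton τ).insert 1)
      _ ≤ 2 := by
          have := Set.ncard_insert_le (1 : Equiv.Perm V) ({τ} : Set (Equiv.Perm V))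
          simpa [Set.ncard_singleton] using this
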